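/- arXiv:q-alg/9508018 — 2 statements merged into one kernel-verified Lean document; each statement's English description precedes it below -/
import Mathlib

section
/- Let V be a vertex operator algebra and let M be a vector space equipped with a linear map v ↦ Y_M(v,z) = Σ_{n∈ℤ} v_n z^{-n-1} (v_n ∈ End M) satisfying only: the truncation condition (v_n w = 0 for n sufficiently large), the vacuum condition Y_M(𝟏,z) = id_M, and the Jacobi identity. Then the L(−1)-derivative property (d/dz) Y_M(v,z) = Y_M(L(−1)v,z) holds for all v ∈ V, and the operators L(n) = ω_{n+1} (the components of Y_M(ω,z)) satisfy the Virasoro relations [L(m),L(n)] = (m−n)L(m+n) + (1/12)(m³−m)δ_{m+n,0}·(rank V) for all m,n ∈ ℤ. -/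
noncomputable section

open scoped BigOperators

/-- A vertex operator algebra over `ℂ` (axioms as in [FLM]), described in terms of the
component operators `aₙ` of the vertex operators `Y(a,z) = ∑_{n ∈ ℤ} aₙ z^{-n-1}`;
the Jacobi identity is imposed in its equivalent component (Borcherds identity) form. -/
structure VOA where
  carrier : Type
  [addCommGroup : AddCommGroup carrier]
  [isModule : Module ℂ carrier]
  /-- `Y a n` is the component operator `aₙ` of the vertex operator `Y(a,z)`. -/
  Y : carrier →ₗ[ℂ] ℤ → Module.End ℂ carrier
  /-- the vacuum vector `𝟏` -/
  one : carrier
  /-- the Virasoro element `ω` -/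
  omega : carrier
  /-- the rank (central charge) of the algebra -/
  rank : ℂ
  /-- the grading `V = ⊕_{n ∈ ℤ} V_n` -/
  grading : ℤ → Submodule ℂ carrier
  grading_indep : iSupIndep grading
  grading_sup : (⨆ n, grading n) = ⊤
  grading_fd : ∀ n, FiniteDimensional ℂ (grading n)
  grading_bdd : ∃ N : ℤ, ∀ n : ℤ, n < N → grading n = ⊥
  one_mem : one ∈ grading 0
  omega_mem : omega ∈ grading 2
  mode_grading : ∀ (r s m : ℤ) (a v : carrier),
    a ∈ grading r → v ∈ grading s → Y a m v ∈ grading (r + s - m - 1)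
  trunc : ∀ a v : carrier, ∃ N : ℤ, ∀ n : ℤ, N ≤ n → Y a n v = 0
  vacuum : ∀ n : ℤ, Y one n = if n = -1 then 1 else 0
  creation : ∀ a : carrier, Y a (-1) one = a
  creation_nonneg : ∀ (a : carrier) (n : ℤ), 0 ≤ n → Y a n one = 0
  jacobi : ∀ (a b v : carrier) (p q r : ℤ),
    (∑ᶠ i : ℕ, ((Ring.choose p i : ℤ) : ℂ) • Y (Y a (r + (i : ℤ)) b) (p + q - (i : ℤ)) v) =
      (∑ᶠ i : ℕ, ((-1 : ℂ) ^ i * ((Ring.choose r i : ℤ) : ℂ)) •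
        (Y a (p + r - (i : ℤ)) (Y b (q + (i : ℤ)) v)
          - ((-1 : ℂ) ^ r) • Y b (q + r - (i : ℤ)) (Y a (p + (i : ℤ)) v)))
  L0_grading : ∀ (n : ℤ) (v : carrier), v ∈ grading n → Y omega 1 v = (n : ℂ) • v
  Lminus1_deriv : ∀ (a : carrier) (n : ℤ), Y (Y omega 0 a) n = (-n : ℂ) • Y a (n - 1)
  virasoro : ∀ m n : ℤ,
    Y omega (m + 1) * Y omega (n + 1) - Y omega (n + 1) * Y omega (m + 1) =
      ((m : ℂ) - (n : ℂ)) • Y omega (m + n + 1)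
        + (if m + n = 0 then ((m : ℂ) ^ 3 - (m : ℂ)) / 12 * rank else 0) • 1

attribute [instance] VOA.addCommGroup VOA.isModule

/-- A weak module for a vertex operator algebra `V`: a vector space `M` with a linear map
`v ↦ Y_M(v,z) = ∑ vₙ z^{-n-1}` satisfying only the truncation condition, the vacuum
condition `Y_M(𝟏,z) = id`, and the Jacobi identity (in component form). -/
structure WeakModule (V : VOA) where
  carrier : Type
  [addCommGroup : AddCommGroup carrier]
  [isModule : Module ℂ carrier]
  /-- `act a n` is the component operator `aₙ` of `Y_M(a,z)`. -/
  act : V.carrier →ₗ[ℂ] ℤ → Module.End ℂ carrier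
  trunc : ∀ (a : V.carrier) (w : carrier), ∃ N : ℤ, ∀ n : ℤ, N ≤ n → act a n w = 0
  vacuum : ∀ n : ℤ, act V.one n = if n = -1 then 1 else 0
  jacobi : ∀ (a b : V.carrier) (w : carrier) (p q r : ℤ),
    (∑ᶠ i : ℕ, ((Ring.choose p i : ℤ) : ℂ) • act (V.Y a (r + (i : ℤ)) b) (p + q - (i : ℤ)) w) =
      (∑ᶠ i : ℕ, ((-1 : ℂ) ^ i * ((Ring.choose r i : ℤ) : ℂ)) •
        (act a (p + r - (i : ℤ)) (act b (q + (i : ℤ)) w)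
          - ((-1 : ℂ) ^ r) • act b (q + r - (i : ℤ)) (act a (p + (i : ℤ)) w)))

attribute [instance] WeakModule.addCommGroup WeakModule.isModule

/-- The Virasoro operators `L(n) = ω_{n+1}` on a weak module. -/
def WeakModule.L {V : VOA} (M : WeakModule V) (n : ℤ) : Module.End ℂ M.carrier :=
  M.act V.omega (n + 1)


section Aux

lemma choose3 (p : ℤ) : ((Ring.choose p 3 : ℤ) : ℂ) = (p:ℂ) * ((p:ℂ)-1) * ((p:ℂ)-2) / 6 := by
  have h := Ring.descPochhammer_eq_factorial_smul_choose (R := ℤ) p 3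
  rw [← Polynomial.eval_eq_smeval] at h
  have h2 : (descPochhammer ℤ 3).eval p = p * (p-1) * (p-2) := by
    simp [descPochhammer]; ring
  rw [h2] at h
  have h3 : ((p*(p-1)*(p-2) : ℤ):ℂ) = 6 * ((Ring.choose p 3 : ℤ):ℂ) := by
    rw [h, Nat.factorial]; norm_num
  rw [eq_div_iff (by norm_num : (6:ℂ) ≠ 0)]
  push_cast at h3
  linear_combination -h3

variable {V : VOA}

/-- `L(-1)a = a₋₂𝟏` in `V`. -/
lemma VOA.omega_zero_eq (a : V.carrier) : V.Y V.omega 0 a = V.Y a (-2) V.one := by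
  have h := V.Lminus1_deriv a (-1)
  have h2 := congrArg (fun E : Module.End ℂ V.carrier => E V.one) h
  simp only [V.creation] at h2
  rw [h2]
  norm_num

lemma VOA.omega_one_omega : V.Y V.omega 1 V.omega = (2:ℂ) • V.omega := by
  have := V.L0_grading 2 V.omega V.omega_mem
  simpa using this

lemma VOA.Y_omega_one_zero (n : ℤ) (hn : 0 ≤ n) : V.Y V.omega n V.one = 0 :=
  V.creation_nonneg _ n hn

/-- `L(k)ω` for `k ≥ 1`. -/
lemma VOA.Lk_omega (k : ℤ) (hk : 1 ≤ k) :
    V.Y V.omega (k+1) V.omega =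
      (if k = 2 then ((k:ℂ)^3 - (k:ℂ))/12 * V.rank else 0) • V.one := by
  have h := LinearMap.congr_fun (V.virasoro k (-2)) V.one
  have e1 : (-2 : ℤ) + 1 = -1 := by norm_num
  have e2 : k + -2 + 1 = k - 1 := by ring
  have e3 : k + -2 = k - 2 := by ring
  rw [e1, e2, e3] at h
  rw [LinearMap.sub_apply, Module.End.mul_apply, Module.End.mul_apply,
    V.creation, V.creation_nonneg _ (k+1) (by omega), map_zero,
    LinearMap.add_apply, LinearMap.smul_apply, LinearMap.smul_apply,
    V.creation_nonneg _ (k-1) (by omega), Module.End.one_apply, smul_zero,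
    sub_zero, zero_add] at h
  rw [h]
  by_cases h2 : k = 2
  · subst h2; norm_num
  · have : k - 2 ≠ 0 := by omega
    simp [h2, this]

end Aux

namespace WeakModule

variable {V : VOA} (M : WeakModule V)

lemma act_zero_apply (n : ℤ) (w : M.carrier) : M.act (0 : V.carrier) n w = 0 := by
  rw [map_zero]; rfl

lemma act_one_apply (n : ℤ) (w : M.carrier) :
    M.act V.one n w = if n = -1 then w else 0 := by
  rw [M.vacuum]
  split_ifs <;> rfl

/-- The `L(-1)`-derivative property on a weak module. -/
lemma deriv (v : V.carrier) (n : ℤ) :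
    M.act (V.Y V.omega 0 v) n = (-n : ℂ) • M.act v (n - 1) := by
  ext w
  have h := M.jacobi v V.one w (n+1) (-1) (-2)
  -- LHS finsum has support in {0, 1}
  rw [finsum_eq_sum_of_support_subset _ (s := ({0,1} : Finset ℕ))
      (by
        intro i hi
        simp only [Function.mem_support, ne_eq, Finset.coe_insert, Set.mem_insert_iff,
          Finset.coe_singleton, Set.mem_singleton_iff] at hi ⊢
        by_contra hc
        push_neg at hc
        apply hi
        rw [V.creation_nonneg v (-2 + (i:ℤ)) (by omega), M.act_zero_apply, smul_zero]),
    finsum_eq_sum_of_support_subset _ (s := ({0} : Finset ℕ))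
      (by
        intro i hi
        simp only [Function.mem_support, ne_eq, Finset.coe_singleton,
          Set.mem_singleton_iff] at hi ⊢
        by_contra hc
        apply hi
        rw [M.act_one_apply, M.act_one_apply, if_neg (by omega), if_neg (by omega)]
        simp)] at h
  rw [Finset.sum_pair (by norm_num : (0:ℕ) ≠ 1), Finset.sum_singleton] at h
  rw [M.act_one_apply, M.act_one_apply, if_pos (by norm_num), if_neg (by norm_num)] at h
  rw [Ring.choose_zero_right, Ring.choose_zero_right, Ring.choose_one_right] at h
  norm_num at h
  rw [V.creation, (by ring : n + 1 + -2 = n - 1)] at h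
  rw [V.omega_zero_eq, LinearMap.smul_apply, eq_sub_of_add_eq h]
  module

/-- The Virasoro relations on a weak module. -/
lemma virasoroM (m n : ℤ) :
    M.L m * M.L n - M.L n * M.L m =
      ((m : ℂ) - (n : ℂ)) • M.L (m + n)
        + (if m + n = 0 then ((m : ℂ) ^ 3 - (m : ℂ)) / 12 * V.rank else 0) • 1 := by
  ext w
  have h := M.jacobi V.omega V.omega w (m+1) (n+1) 0
  rw [finsum_eq_sum_of_support_subset _ (s := ({0,1,2,3} : Finset ℕ))
      (by
        intro i hi
        simp only [Function.mem_support, ne_eq, Finset.coe_insert, Set.mem_insert_iff,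
          Finset.coe_singleton, Set.mem_singleton_iff] at hi ⊢
        by_contra hc
        push_neg at hc
        apply hi
        have h4 := VOA.Lk_omega (V := V) ((i:ℤ)-1) (by omega)
        rw [(by ring : (0:ℤ) + (i:ℤ) = ((i:ℤ)-1)+1), h4, if_neg (by omega), zero_smul,
          M.act_zero_apply, smul_zero]),
    finsum_eq_sum_of_support_subset _ (s := ({0} : Finset ℕ))
      (by
        intro i hi
        simp only [Function.mem_support, ne_eq, Finset.coe_singleton,
          Set.mem_singleton_iff] at hi ⊢
        by_contra hc
        apply hi
        rw [Ring.choose_zero_pos ℤ (by omega : 0 < i)]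
        norm_num)] at h
  rw [Finset.sum_insert (by norm_num), Finset.sum_insert (by norm_num),
    Finset.sum_insert (by norm_num), Finset.sum_singleton, Finset.sum_singleton] at h
  norm_num at h
  have h2 : V.Y V.omega 2 V.omega = 0 := by
    have := VOA.Lk_omega (V := V) 1 le_rfl
    norm_num at this
    exact this
  have h3 := VOA.Lk_omega (V := V) 2 (by norm_num)
  norm_num at h3
  rw [M.deriv V.omega (m+1+(n+1)), VOA.omega_one_omega, h2, h3] at h
  simp only [map_smul, Pi.smul_apply, LinearMap.smul_apply, M.act_zero_apply, smul_zero,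
    M.act_one_apply] at h
  rw [(by ring : m + 1 + (n + 1) - 1 = m + n + 1), choose3] at h
  simp only [WeakModule.L, LinearMap.sub_apply, Module.End.mul_apply, LinearMap.add_apply,
    LinearMap.smul_apply, Module.End.one_apply]
  rw [← h]
  push_cast
  by_cases hmn : m + n = 0
  · rw [if_pos hmn, if_pos (by omega : m + 1 + (n + 1) - 3 = -1)]
    match_scalars <;> ring
  · rw [if_neg hmn, if_neg (by omega : ¬ m + 1 + (n + 1) - 3 = -1), smul_zero, smul_zero]
    match_scalars <;> ring

end WeakModule

/-- For any weak module `(M, Y_M)` over a vertex operator algebra `V` (so `M` satisfies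
only the truncation condition, the vacuum condition and the Jacobi identity), the
`L(-1)`-derivative property `Y_M(L(-1)v, z) = (d/dz) Y_M(v,z)` holds, and the operators
`L(n) = ω_{n+1}` satisfy the Virasoro relations
`[L(m), L(n)] = (m-n) L(m+n) + (1/12)(m³-m) δ_{m+n,0} (rank V)`. -/
theorem weakModule_Lminus1_derivative_and_virasoro (V : VOA) (M : WeakModule V) :
    (∀ (v : V.carrier) (n : ℤ),
      M.act (V.Y V.omega 0 v) n = (-n : ℂ) • M.act v (n - 1)) ∧
    (∀ m n : ℤ,
      M.L m * M.L n - M.L n * M.L m =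
        ((m : ℂ) - (n : ℂ)) • M.L (m + n)
          + (if m + n = 0 then ((m : ℂ) ^ 3 - (m : ℂ)) / 12 * V.rank else 0) • 1) :=
  ⟨M.deriv, M.virasoroM⟩
end
end

section
/- Let c = c_{p,q}, let M be a weak L(c,0)-module, let u ∈ M, and let k be a positive integer such that L(k)u ≠ 0 and L(n)u = 0 for all n > k. Set ω^{(n)} = (1/n!)L(−1)ⁿω. Then for any nonnegative integers n₁, …, n_r, the lowest power of z occurring in Y_M(ω^{(n₁)}_{−1} ⋯ ω^{(n_r)}_{−1}𝟏, z)u is −r(k+2) − n₁ − ⋯ − n_r, and its coefficient equals ∏_{i=1}^r C(−k−2, n_i) · L(k)^r u, where C(·,·) denotes the binomial coefficient. -/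
noncomputable section

open scoped BigOperators

/-- The central charge `c_{p,q} = 1 - 6(p-q)²/(pq)` of the discrete series of the
Virasoro algebra. -/
def cpq (p q : ℕ) : ℂ := 1 - 6 * ((p : ℂ) - (q : ℂ)) ^ 2 / ((p : ℂ) * (q : ℂ))

/-- The vertex operator algebra `L(c_{p,q}, 0)` associated with the irreducible lowest
weight module for the Virasoro algebra with central charge `c_{p,q}` and lowest weight
`0`: a vertex operator algebra of rank `c_{p,q}` which is irreducible under the action of
the Virasoro algebra, i.e. under the component operators `L(n)` of `Y(ω,z)`.  (The vacuum
is then a lowest weight vector of lowest weight `0`, by the vacuum axioms.) -/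
structure VirasoroVOA (p q : ℕ) where
  V : VOA
  rank_eq : V.rank = cpq p q
  irreducible : ∀ U : Submodule ℂ V.carrier,
    (∀ (n : ℤ) (w : V.carrier), w ∈ U → V.Y V.omega n w ∈ U) → U = ⊥ ∨ U = ⊤

/-- The vector `ω^{(n₁)}_{-1} ⋯ ω^{(n_r)}_{-1} 𝟏 ∈ V`, where `ω^{(n)} = (1/n!) L(-1)ⁿ ω`
(and `L(-1) = ω₀`). -/
def omegaWord (V : VOA) : List ℕ → V.carrier
  | [] => V.one
  | n :: ns =>
    V.Y ((n.factorial : ℂ)⁻¹ • (((V.Y V.omega 0) ^ n) V.omega)) (-1) (omegaWord V ns)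


namespace VOAAux

open Finset

lemma descP (x : ℂ) (n : ℕ) :
    (descPochhammer ℂ n).eval x = ∏ l ∈ Finset.range n, (x - l) := by
  induction n with
  | zero => simp
  | succ n ih => rw [descPochhammer_succ_eval, ih, Finset.prod_range_succ]

lemma chooseC (r : ℤ) (n : ℕ) :
    ((Ring.choose r n : ℤ) : ℂ) * (n.factorial : ℂ) = ∏ l ∈ Finset.range n, ((r : ℂ) - l) := by
  have h := Ring.descPochhammer_eq_factorial_smul_choose (R := ℤ) r n
  rw [← Polynomial.eval_eq_smeval] at h
  have h2 : (((descPochhammer ℤ n).eval r : ℤ) : ℂ) = (descPochhammer ℂ n).eval (r : ℂ) :=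
    descPochhammer_eval_cast (R := ℂ) n r
  rw [← descP, ← h2, h, nsmul_eq_mul] ; push_cast ; ring

lemma factC (n : ℕ) : ((n.factorial : ℂ)) ≠ 0 := by
  exact_mod_cast n.factorial_ne_zero

lemma chooseC_eq {r : ℤ} {n : ℕ} :
    ((Ring.choose r n : ℤ) : ℂ) = (n.factorial : ℂ)⁻¹ * ∏ l ∈ Finset.range n, ((r : ℂ) - l) := by
  rw [← chooseC r n] ; rw [mul_comm ((n.factorial : ℂ))⁻¹, mul_assoc, mul_inv_cancel₀ (factC n), mul_one]

lemma choose_lt_zero {i n : ℕ} (h : i < n) : ((Ring.choose (i : ℤ) n : ℤ) : ℂ) = 0 := by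
  have h1 := chooseC (i : ℤ) n
  have h2 : ∏ l ∈ Finset.range n, (((i : ℤ) : ℂ) - l) = 0 :=
    Finset.prod_eq_zero (Finset.mem_range.2 h) (by push_cast ; ring)
  have := h1.trans h2
  exact (mul_eq_zero.mp this).resolve_right (factC n)

lemma prod_neg_one (i : ℕ) :
    ∏ l ∈ Finset.range i, (((-1 : ℤ) : ℂ) - l) = (-1 : ℂ) ^ i * (i.factorial : ℂ) := by
  induction i with
  | zero => simp
  | succ m ih =>
      rw [Finset.prod_range_succ, ih, Nat.factorial_succ]
      push_cast ; ring

lemma choose_neg_one (i : ℕ) : ((Ring.choose (-1 : ℤ) i : ℤ) : ℂ) = (-1 : ℂ) ^ i := by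
  have h3 := (chooseC (-1 : ℤ) i).trans (prod_neg_one i)
  exact mul_right_cancel₀ (factC i) h3

lemma choose_neg_eq (k : ℤ) (n : ℕ) :
    ((Ring.choose (-k - 2 : ℤ) n : ℤ) : ℂ)
      = (-1 : ℂ) ^ n * ((Ring.choose (k + n + 1 : ℤ) n : ℤ) : ℂ) := by
  rw [chooseC_eq, chooseC_eq]
  rw [mul_comm ((-1 : ℂ) ^ n), mul_assoc]
  congr 1
  have h1 : ∏ l ∈ Finset.range n, (((-k - 2 : ℤ) : ℂ) - l)
      = (-1 : ℂ) ^ n * ∏ l ∈ Finset.range n, ((k : ℂ) + 2 + l) := by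
    induction n with
    | zero => simp
    | succ m ih =>
        rw [Finset.prod_range_succ, Finset.prod_range_succ, ih]
        push_cast ; ring
  have h2 : ∏ l ∈ Finset.range n, (((k + n + 1 : ℤ) : ℂ) - l)
      = ∏ l ∈ Finset.range n, ((k : ℂ) + 2 + l) := by
    have := Finset.prod_range_reflect (fun j : ℕ => ((k : ℂ) + 2 + j)) n
    rw [← this]
    refine Finset.prod_congr rfl ?_
    intro j hj
    rw [Finset.mem_range] at hj
    have hle : j + 1 ≤ n := hj
    have : ((n - 1 - j : ℕ) : ℂ) = (n : ℂ) - 1 - j := by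
      have : (n - 1 - j : ℕ) = n - (j + 1) := by omega
      rw [this]
      push_cast [Nat.cast_sub hle]
      ring
    rw [this]
    push_cast
    ring
  rw [h1, h2, mul_comm]

lemma choose_zero_comp {i : ℕ} (h : i ≠ 0) : ((Ring.choose (0 : ℤ) i : ℤ) : ℂ) = 0 := by
  rw [Ring.choose_zero_pos ℤ (Nat.pos_of_ne_zero h)] ; simp

variable {V : VOA} (M : WeakModule V)

lemma act_vac (m : ℤ) (w : M.carrier) :
    M.act V.one m w = if m = -1 then w else 0 := by
  rw [M.vacuum m]
  split <;> simp

lemma act_smul' (c : ℂ) (a : V.carrier) (m : ℤ) (w : M.carrier) :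
    M.act (c • a) m w = c • M.act a m w := by
  rw [map_smul] ; rfl

lemma act_zero' (m : ℤ) (w : M.carrier) : M.act (0 : V.carrier) m w = 0 := by
  rw [map_zero] ; rfl

lemma Ym2_one (a : V.carrier) : V.Y a (-2) V.one = V.Y V.omega 0 a := by
  have h := V.Lminus1_deriv a (-1)
  have h2 := congrArg (fun f => f V.one) h
  simp only [LinearMap.smul_apply] at h2
  rw [V.creation] at h2
  rw [show (-1 : ℤ) - 1 = -2 from by ring] at h2
  rw [h2]
  norm_num

lemma act_L1deriv (a : V.carrier) (m : ℤ) (w : M.carrier) :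
    M.act (V.Y V.omega 0 a) m w = (-m : ℂ) • M.act a (m - 1) w := by
  have J := M.jacobi a V.one w (m + 1) (-1) (-2)
  have hL : (∑ᶠ i : ℕ, ((Ring.choose (m + 1 : ℤ) i : ℤ) : ℂ) •
        M.act (V.Y a (-2 + (i : ℤ)) V.one) (m + 1 + -1 - (i : ℤ)) w)
      = M.act (V.Y V.omega 0 a) m w + ((m : ℂ) + 1) • M.act a (m - 1) w := by
    rw [finsum_eq_sum_of_support_subset _ (s := ({0, 1} : Finset ℕ)) ?_]
    · rw [Finset.sum_pair (by norm_num : (0 : ℕ) ≠ 1)]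
      congr 1
      · rw [show ((0 : ℕ) : ℤ) = 0 from rfl, show (-2 : ℤ) + 0 = -2 from by ring,
          show (m + 1 + -1 - (0 : ℤ)) = m from by ring, Ym2_one, Ring.choose_zero_right]
        simp
      · rw [show ((1 : ℕ) : ℤ) = 1 from rfl, show (-2 : ℤ) + 1 = -1 from by ring,
          show (m + 1 + -1 - (1 : ℤ)) = m - 1 from by ring, V.creation, Ring.choose_one_right]
        push_cast ; ring_nf
    · intro i hi
      simp only [Function.mem_support] at hi
      simp only [Finset.coe_insert, Finset.coe_singleton, Set.mem_insert_iff,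
        Set.mem_singleton_iff]
      by_contra hc
      push_neg at hc
      apply hi
      rw [V.creation_nonneg a (-2 + (i : ℤ)) (by omega), act_zero', smul_zero]
  have hR : (∑ᶠ i : ℕ, ((-1 : ℂ) ^ i * ((Ring.choose (-2 : ℤ) i : ℤ) : ℂ)) •
        (M.act a (m + 1 + -2 - (i : ℤ)) (M.act V.one (-1 + (i : ℤ)) w)
          - ((-1 : ℂ) ^ (-2 : ℤ)) • M.act V.one (-1 + -2 - (i : ℤ)) (M.act a (m + 1 + (i : ℤ)) w)))
      = M.act a (m - 1) w := by
    rw [finsum_eq_single _ 0 ?_]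
    · rw [show ((0 : ℕ) : ℤ) = 0 from rfl, show (m + 1 + -2 - (0 : ℤ)) = m - 1 from by ring,
        show ((-1 : ℤ) + 0) = -1 from by ring, show ((-1 : ℤ) + -2 - 0) = -3 from by ring,
        act_vac, act_vac]
      norm_num [Ring.choose_zero_right]
    · intro i hi
      rw [act_vac, act_vac]
      rw [if_neg (by omega), if_neg (by omega)]
      rw [map_zero]
      simp
  have key := hL.symm.trans (J.trans hR)
  have h5 := eq_sub_of_add_eq key
  rw [h5]
  module

lemma act_comm0 (b : V.carrier) (t : ℤ) (x : M.carrier) :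
    M.act (V.Y V.omega 0 b) t x
      = M.act V.omega 0 (M.act b t x) - M.act b t (M.act V.omega 0 x) := by
  have J := M.jacobi V.omega b x 0 t 0
  have hL : (∑ᶠ i : ℕ, ((Ring.choose (0 : ℤ) i : ℤ) : ℂ) •
        M.act (V.Y V.omega (0 + (i : ℤ)) b) (0 + t - (i : ℤ)) x)
      = M.act (V.Y V.omega 0 b) t x := by
    rw [finsum_eq_single _ 0 ?_]
    · rw [show ((0 : ℕ) : ℤ) = 0 from rfl, show ((0 : ℤ) + 0) = 0 from by ring,
        show ((0 : ℤ) + t - 0) = t from by ring, Ring.choose_zero_right]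
      simp
    · intro i hi
      rw [choose_zero_comp hi, zero_smul]
  have hR : (∑ᶠ i : ℕ, ((-1 : ℂ) ^ i * ((Ring.choose (0 : ℤ) i : ℤ) : ℂ)) •
        (M.act V.omega (0 + 0 - (i : ℤ)) (M.act b (t + (i : ℤ)) x)
          - ((-1 : ℂ) ^ (0 : ℤ)) • M.act b (t + 0 - (i : ℤ)) (M.act V.omega (0 + (i : ℤ)) x)))
      = M.act V.omega 0 (M.act b t x) - M.act b t (M.act V.omega 0 x) := by
    rw [finsum_eq_single _ 0 ?_]
    · norm_num [Ring.choose_zero_right]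
    · intro i hi
      rw [choose_zero_comp hi]
      simp
  exact hL.symm.trans (J.trans hR)

lemma act_Lm1_swap (b : V.carrier) (t : ℤ) (x : M.carrier) :
    M.act b t (M.act V.omega 0 x)
      = M.act V.omega 0 (M.act b t x) + (t : ℂ) • M.act b (t - 1) x := by
  have h1 := act_comm0 M b t x
  have h2 := act_L1deriv M b t x
  rw [h2] at h1
  have h4 := sub_eq_iff_eq_add.mp h1.symm
  rw [h4]
  module

lemma act_iterate_neg_one (a b : V.carrier) (s : ℤ) (w : M.carrier) :
    M.act (V.Y a (-1) b) s w
      = ∑ᶠ i : ℕ, (M.act a (-1 - (i : ℤ)) (M.act b (s + (i : ℤ)) w)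
          + M.act b (s - 1 - (i : ℤ)) (M.act a (i : ℤ) w)) := by
  have J := M.jacobi a b w 0 s (-1)
  have hL : (∑ᶠ i : ℕ, ((Ring.choose (0 : ℤ) i : ℤ) : ℂ) •
        M.act (V.Y a (-1 + (i : ℤ)) b) (0 + s - (i : ℤ)) w)
      = M.act (V.Y a (-1) b) s w := by
    rw [finsum_eq_single _ 0 ?_]
    · rw [show ((0 : ℕ) : ℤ) = 0 from rfl, show ((-1 : ℤ) + 0) = -1 from by ring,
        show ((0 : ℤ) + s - 0) = s from by ring, Ring.choose_zero_right]
      simp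
    · intro i hi
      rw [choose_zero_comp hi, zero_smul]
  have hR : (∑ᶠ i : ℕ, ((-1 : ℂ) ^ i * ((Ring.choose (-1 : ℤ) i : ℤ) : ℂ)) •
        (M.act a (0 + -1 - (i : ℤ)) (M.act b (s + (i : ℤ)) w)
          - ((-1 : ℂ) ^ (-1 : ℤ)) • M.act b (s + -1 - (i : ℤ)) (M.act a (0 + (i : ℤ)) w)))
      = ∑ᶠ i : ℕ, (M.act a (-1 - (i : ℤ)) (M.act b (s + (i : ℤ)) w)
          + M.act b (s - 1 - (i : ℤ)) (M.act a (i : ℤ) w)) := by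
    apply finsum_congr
    intro i
    rw [choose_neg_one, show ((-1 : ℂ) ^ i * (-1 : ℂ) ^ i) = 1 from by
      rw [← mul_pow] ; norm_num, one_smul]
    rw [show ((0 : ℤ) + -1 - (i : ℤ)) = -1 - i from by ring,
      show (s + (-1 : ℤ) - (i : ℤ)) = s - 1 - i from by ring,
      show ((0 : ℤ) + (i : ℤ)) = i from by ring,
      show ((-1 : ℂ) ^ (-1 : ℤ)) = -1 from by norm_num]
    module
  exact hL.symm.trans (J.trans hR)

lemma Y_omega_one_omega : V.Y V.omega 1 V.omega = ((2 : ℤ) : ℂ) • V.omega :=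
  V.L0_grading 2 V.omega V.omega_mem

lemma Y_omega_big (i : ℤ) (hi : 2 ≤ i) :
    V.Y V.omega i V.omega
      = (if i = 3 then (((i - 1 : ℤ) : ℂ) ^ 3 - ((i - 1 : ℤ) : ℂ)) / 12 * V.rank else 0)
          • V.one := by
  have h := V.virasoro (i - 1) (-2)
  have h2 := congrArg (fun f => f V.one) h
  simp only [LinearMap.sub_apply, LinearMap.add_apply, LinearMap.smul_apply,
    Module.End.mul_apply, Module.End.one_apply] at h2
  rw [show (i - 1 + 1 : ℤ) = i from by ring, show ((-2 : ℤ) + 1) = -1 from by ring,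
    show (i - 1 + -2 + 1 : ℤ) = i - 2 from by ring, V.creation,
    V.creation_nonneg V.omega i (by omega), V.creation_nonneg V.omega (i - 2) (by omega),
    map_zero, sub_zero, smul_zero, zero_add] at h2
  rw [h2]
  congr 1
  split_ifs with hc1 hc2 hc2 <;> first | rfl | omega

lemma virasoro_comm (m j : ℤ) (hmj : m + j ≠ 0) (w : M.carrier) :
    M.act V.omega (m + 1) (M.act V.omega (j + 1) w)
        - M.act V.omega (j + 1) (M.act V.omega (m + 1) w)
      = ((m : ℂ) - (j : ℂ)) • M.act V.omega (m + j + 1) w := by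
  have J := M.jacobi V.omega V.omega w (m + 1) (j + 1) 0
  have hL : (∑ᶠ i : ℕ, ((Ring.choose (m + 1 : ℤ) i : ℤ) : ℂ) •
        M.act (V.Y V.omega (0 + (i : ℤ)) V.omega) (m + 1 + (j + 1) - (i : ℤ)) w)
      = ((m : ℂ) - (j : ℂ)) • M.act V.omega (m + j + 1) w := by
    rw [finsum_eq_sum_of_support_subset _ (s := ({0, 1} : Finset ℕ)) ?_]
    · rw [Finset.sum_pair (by norm_num : (0 : ℕ) ≠ 1)]
      rw [show ((0 : ℕ) : ℤ) = 0 from rfl, show ((1 : ℕ) : ℤ) = 1 from rfl,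
        show ((0 : ℤ) + 0) = 0 from by ring, show ((0 : ℤ) + 1) = 1 from by ring,
        show (m + 1 + (j + 1) - (0 : ℤ)) = m + j + 2 from by ring,
        show (m + 1 + (j + 1) - (1 : ℤ)) = m + j + 1 from by ring,
        Ring.choose_zero_right, Ring.choose_one_right]
      rw [act_L1deriv M V.omega (m + j + 2) w, Y_omega_one_omega, act_smul',
        show (m + j + 2 - 1 : ℤ) = m + j + 1 from by ring]
      push_cast
      module
    · intro i hi
      simp only [Function.mem_support] at hi
      simp only [Finset.coe_insert, Finset.coe_singleton, Set.mem_insert_iff,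
        Set.mem_singleton_iff]
      by_contra hc
      push_neg at hc
      apply hi
      rw [Y_omega_big (0 + (i : ℤ)) (by omega), act_smul']
      by_cases h3 : (0 : ℤ) + (i : ℤ) = 3
      · rw [if_pos h3, act_vac, if_neg (by omega)] ; simp
      · rw [if_neg h3] ; simp
  have hR : (∑ᶠ i : ℕ, ((-1 : ℂ) ^ i * ((Ring.choose (0 : ℤ) i : ℤ) : ℂ)) •
        (M.act V.omega (m + 1 + 0 - (i : ℤ)) (M.act V.omega (j + 1 + (i : ℤ)) w)
          - ((-1 : ℂ) ^ (0 : ℤ)) •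
            M.act V.omega (j + 1 + 0 - (i : ℤ)) (M.act V.omega (m + 1 + (i : ℤ)) w)))
      = M.act V.omega (m + 1) (M.act V.omega (j + 1) w)
          - M.act V.omega (j + 1) (M.act V.omega (m + 1) w) := by
    rw [finsum_eq_single _ 0 ?_]
    · norm_num [Ring.choose_zero_right]
    · intro i hi
      rw [choose_zero_comp hi]
      simp
  exact hR.symm.trans (J.symm.trans hL)

lemma act_pow_omega (n : ℕ) (m : ℤ) (w : M.carrier) :
    M.act (((V.Y V.omega 0) ^ n) V.omega) m w
      = ((-1 : ℂ) ^ n * ∏ l ∈ Finset.range n, ((m : ℂ) - l)) • M.act V.omega (m - n) w := by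
  induction n generalizing m with
  | zero => simp
  | succ n ih =>
      have hp : ((V.Y V.omega 0) ^ (n + 1)) V.omega
          = V.Y V.omega 0 (((V.Y V.omega 0) ^ n) V.omega) := by
        rw [pow_succ']
        rfl
      rw [hp, act_L1deriv, ih (m - 1)]
      rw [smul_smul]
      rw [show (m - 1 - (n : ℤ)) = m - ((n : ℕ) + 1 : ℕ) from by push_cast ; ring]
      congr 1
      rw [Finset.prod_range_succ']
      push_cast
      rw [show (∏ l ∈ Finset.range n, ((m : ℂ) - 1 - (l : ℕ)))
          = ∏ l ∈ Finset.range n, ((m : ℂ) - ((l : ℕ) + 1)) from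
        Finset.prod_congr rfl fun l _ => by ring]
      ring

lemma act_omegan (n : ℕ) (m : ℤ) (w : M.carrier) :
    M.act ((n.factorial : ℂ)⁻¹ • (((V.Y V.omega 0) ^ n) V.omega)) m w
      = ((-1 : ℂ) ^ n * ((Ring.choose m n : ℤ) : ℂ)) • M.act V.omega (m - n) w := by
  rw [act_smul', act_pow_omega, smul_smul]
  congr 1
  rw [chooseC_eq]
  ring

lemma main_induction {V : VOA} (M : WeakModule V) (k : ℤ) (hk : 0 < k) :
    ∀ ns : List ℕ, ∀ u : M.carrier,
      (∀ t : ℤ, k + 1 < t → M.act V.omega t u = 0) →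
      (∀ s : ℤ, (ns.length : ℤ) * (k + 2) + (ns.sum : ℤ) - 1 < s →
        M.act (omegaWord V ns) s u = 0) ∧
      M.act (omegaWord V ns) ((ns.length : ℤ) * (k + 2) + (ns.sum : ℤ) - 1) u
        = ((ns.map fun n' => ((Ring.choose (-k - 2 : ℤ) n' : ℤ) : ℂ)).prod) •
            (((M.act V.omega (k + 1)) ^ ns.length) u) := by
  intro ns
  induction ns with
  | nil =>
      intro u hu
      constructor
      · intro s hs
        simp only [List.length_nil, List.sum_nil, Nat.cast_zero, zero_mul, zero_add] at hs
        rw [show omegaWord V ([] : List ℕ) = V.one from rfl, act_vac, if_neg (by omega)]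
      · simp only [List.length_nil, List.sum_nil, Nat.cast_zero, zero_mul, zero_add,
          List.map_nil, List.prod_nil, pow_zero, one_smul]
        rw [show omegaWord V ([] : List ℕ) = V.one from rfl, act_vac]
        norm_num [Module.End.one_apply]
  | cons n ns ih =>
      intro u hu
      set v : V.carrier := omegaWord V ns with hv
      have hw : omegaWord V (n :: ns) = V.Y ((n.factorial : ℂ)⁻¹ • (((V.Y V.omega 0) ^ n) V.omega)) (-1) v := rfl
      set D : ℤ := (ns.length : ℤ) * (k + 2) + (ns.sum : ℤ) with hD
      have hu' : ∀ t : ℤ, 1 ≤ t → t ≤ k + 1 →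
          ∀ r : ℤ, k + 1 < r → M.act V.omega r (M.act V.omega t u) = 0 := by
        intro t ht1 ht2 r hr
        have hc := virasoro_comm M (r - 1) (t - 1) (by omega) u
        rw [show (r - 1 + 1 : ℤ) = r from by ring, show (t - 1 + 1 : ℤ) = t from by ring,
          show (r - 1 + (t - 1) + 1 : ℤ) = r + t - 1 from by ring] at hc
        rw [hu r hr, hu (r + t - 1) (by omega), map_zero, sub_zero, smul_zero] at hc
        exact hc
      obtain ⟨ih1, ih2⟩ := ih u hu
      have ihx : ∀ t : ℤ, 1 ≤ t → t ≤ k + 1 →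
          (∀ s : ℤ, D - 1 < s → M.act v s (M.act V.omega t u) = 0) ∧
          M.act v (D - 1) (M.act V.omega t u)
            = ((ns.map fun n' => ((Ring.choose (-k - 2 : ℤ) n' : ℤ) : ℂ)).prod) •
                (((M.act V.omega (k + 1)) ^ ns.length) (M.act V.omega t u)) :=
        fun t ht1 ht2 => ih (M.act V.omega t u) (fun r hr => hu' t ht1 ht2 r hr)
      have hfirst : ∀ s : ℤ, D + k + (n : ℤ) + 1 ≤ s → ∀ i : ℕ,
          M.act ((n.factorial : ℂ)⁻¹ • (((V.Y V.omega 0) ^ n) V.omega)) (-1 - (i : ℤ)) (M.act v (s + (i : ℤ)) u) = 0 := by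
        intro s hs i
        rw [ih1 (s + i) (by omega), map_zero]
      have hsecond : ∀ s : ℤ, D + k + (n : ℤ) + 1 ≤ s → ∀ i : ℕ, (i : ℤ) ≠ k + (n : ℤ) + 1 →
          M.act v (s - 1 - (i : ℤ)) (M.act ((n.factorial : ℂ)⁻¹ • (((V.Y V.omega 0) ^ n) V.omega)) (i : ℤ) u) = 0 := by
        intro s hs i hne
        rw [act_omegan]
        rcases lt_or_ge (i : ℤ) (n : ℤ) with hlt | hge
        · rw [choose_lt_zero (by exact_mod_cast hlt), mul_zero, zero_smul, map_zero]
        · rcases eq_or_lt_of_le hge with heq | hgt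
          · rw [map_smul, show ((i : ℤ) - (n : ℕ)) = 0 from by omega, act_Lm1_swap,
              ih1 (s - 1 - (i : ℤ)) (by omega), ih1 (s - 1 - (i : ℤ) - 1) (by omega)]
            simp
          · rcases lt_or_ge (k + (n : ℤ) + 1) (i : ℤ) with hbig | hmid
            · rw [hu ((i : ℤ) - (n : ℕ)) (by omega), smul_zero, map_zero]
            · rw [map_smul,
                (ihx ((i : ℤ) - (n : ℕ)) (by omega) (by omega)).1 (s - 1 - (i : ℤ)) (by omega),
                smul_zero]
      have hthird : ∀ s : ℤ, D + k + (n : ℤ) + 1 < s → ∀ i : ℕ, (i : ℤ) = k + (n : ℤ) + 1 →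
          M.act v (s - 1 - (i : ℤ)) (M.act ((n.factorial : ℂ)⁻¹ • (((V.Y V.omega 0) ^ n) V.omega)) (i : ℤ) u) = 0 := by
        intro s hs i hieq
        rw [act_omegan, map_smul, show ((i : ℤ) - (n : ℕ)) = k + 1 from by omega,
          (ihx (k + 1) (by omega) (by omega)).1 (s - 1 - (i : ℤ)) (by omega), smul_zero]
      constructor
      · intro s hs
        have hs' : D + k + (n : ℤ) + 1 < s := by
          simp only [List.length_cons, List.sum_cons, Nat.cast_add, Nat.cast_one] at hs
          have hexp : ((ns.length : ℤ) + 1) * (k + 2) = (ns.length : ℤ) * (k + 2) + (k + 2) := by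
            ring
          rw [hexp] at hs
          rw [hD]
          linarith [hs]
        rw [hw, act_iterate_neg_one]
        apply finsum_eq_zero_of_forall_eq_zero
        intro i
        rw [hfirst s (le_of_lt hs') i, zero_add]
        by_cases hc : (i : ℤ) = k + (n : ℤ) + 1
        · exact hthird s hs' i hc
        · exact hsecond s (le_of_lt hs') i hc
      · have hidx : (((n :: ns).length : ℕ) : ℤ) * (k + 2) + (((n :: ns).sum : ℕ) : ℤ) - 1
            = D + k + (n : ℤ) + 1 := by
          simp only [List.length_cons, List.sum_cons, Nat.cast_add, Nat.cast_one]
          rw [hD]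
          ring
        rw [hw, hidx, act_iterate_neg_one]
        set i0 : ℕ := k.toNat + n + 1 with hi0
        have hi0' : ((i0 : ℕ) : ℤ) = k + (n : ℤ) + 1 := by
          rw [hi0]
          push_cast [Int.toNat_of_nonneg hk.le]
          ring
        rw [finsum_eq_single _ i0 ?_]
        · rw [hfirst (D + k + (n : ℤ) + 1) le_rfl i0, zero_add]
          rw [act_omegan, map_smul, show ((i0 : ℤ) - (n : ℕ)) = k + 1 from by omega,
            show (D + k + (n : ℤ) + 1 - 1 - (i0 : ℤ)) = D - 1 from by omega,
            (ihx (k + 1) (by omega) (by omega)).2]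
          rw [smul_smul]
          simp only [List.map_cons, List.prod_cons, List.length_cons]
          rw [show ((M.act V.omega (k + 1)) ^ (ns.length + 1)) u
              = ((M.act V.omega (k + 1)) ^ ns.length) (M.act V.omega (k + 1) u) from by
            rw [pow_succ] ; rfl]
          rw [hi0', choose_neg_eq k n]
        · intro i hine
          have hne' : (i : ℤ) ≠ k + (n : ℤ) + 1 := by
            intro hcc
            apply hine
            have : ((i : ℕ) : ℤ) = ((i0 : ℕ) : ℤ) := by rw [hi0', hcc]
            exact_mod_cast this
          rw [hfirst (D + k + (n : ℤ) + 1) le_rfl i, zero_add]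
          exact hsecond (D + k + (n : ℤ) + 1) le_rfl i hne'

end VOAAux

/-- Let `M` be a weak `L(c_{p,q},0)`-module, `u ∈ M` and `k` a positive integer with
`L(k)u ≠ 0` and `L(n)u = 0` for all `n > k`.  Then for any nonnegative integers
`n₁, …, n_r`, the lowest power of `z` in `Y_M(ω^{(n₁)}_{-1} ⋯ ω^{(n_r)}_{-1} 𝟏, z) u` is
`-r(k+2) - n₁ - ⋯ - n_r`, with coefficient `(∏ᵢ C(-k-2, nᵢ)) L(k)^r u`.  (The
coefficient of `z^m` in `Y_M(v,z) = ∑ vₙ z^{-n-1}` is `v_{-m-1}`.) -/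
theorem lowest_power_of_omegaWord (p q : ℕ) (hp : 2 ≤ p) (hq : 2 ≤ q)
    (hpq : Nat.Coprime p q) (A : VirasoroVOA p q) (M : WeakModule A.V)
    (u : M.carrier) (k : ℤ) (hk : 0 < k) (h1 : M.L k u ≠ 0)
    (h2 : ∀ n : ℤ, k < n → M.L n u = 0) (ns : List ℕ) :
    (∀ m : ℤ, m < -(ns.length : ℤ) * (k + 2) - (ns.sum : ℤ) →
      M.act (omegaWord A.V ns) (-m - 1) u = 0) ∧
    M.act (omegaWord A.V ns) (-(-(ns.length : ℤ) * (k + 2) - (ns.sum : ℤ)) - 1) u =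
      ((ns.map fun n => ((Ring.choose (-k - 2 : ℤ) n : ℤ) : ℂ)).prod) •
        (((M.L k) ^ ns.length) u) := by
  have hu : ∀ t : ℤ, k + 1 < t → M.act A.V.omega t u = 0 := by
    intro t ht
    have h := h2 (t - 1) (by omega)
    rw [WeakModule.L, show (t - 1 + 1 : ℤ) = t from by ring] at h
    exact h
  obtain ⟨H1, H2⟩ := VOAAux.main_induction M k hk ns u hu
  constructor
  · intro m hm
    apply H1
    have hx : (-(ns.length : ℤ)) * (k + 2) = -((ns.length : ℤ) * (k + 2)) := by ring
    rw [hx] at hm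
    linarith [hm]
  · rw [show (-(-(ns.length : ℤ) * (k + 2) - (ns.sum : ℤ)) - 1)
        = (ns.length : ℤ) * (k + 2) + (ns.sum : ℤ) - 1 from by ring]
    exact H2
end
end
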